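/- Fix s ≥ 1 and P_s = {a_1,…,a_s, c | a_i < c}. For 1 ≤ α ≤ β, let M((α,0),(β,i)) be the number of words of length β with exactly i letters c and β−i letters from {a_1,…,a_s} that are ≥ a_1^α in the generalized subword order. Then Σ_{i=0}^{β} M((α,0),(β,i)) · (−1)^i = 0. -/

import Mathlib

/-- The alphabet `P_s = {a_1, …, a_s, c}` with `a_i < c`: `some i` is `a_i`, `none` is `c`. -/
abbrev Letter (s : ℕ) := Option (Fin s)

/-- The generalized subword order on words over `P_s`. -/
def WLE {s : ℕ} (u w : List (Letter s)) : Prop :=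
  ∃ w', w'.Sublist w ∧ List.Forall₂ (fun x y => x = y ∨ y = none) u w'

namespace AltSumAux

/-- `P a y` : the letter `y` is either `a` or `c`. -/
def P {s : ℕ} (a : Fin s) (y : Letter s) : Bool := y == some a || y == none

lemma P_iff {s : ℕ} {a : Fin s} {y : Letter s} : P a y = true ↔ (y = some a ∨ y = none) := by
  simp [P]

/-- the sign-reversing toggle `a ↔ c`. -/
def toggle {s : ℕ} (a : Fin s) (y : Letter s) : Letter s :=
  if y = none then some a else none

lemma P_toggle {s : ℕ} (a : Fin s) (y : Letter s) : P a (toggle a y) = true := by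
  rcases y with _ | y <;> simp [toggle, P]

lemma toggle_toggle {s : ℕ} (a : Fin s) {y : Letter s} (h : P a y = true) :
    toggle a (toggle a y) = y := by
  rcases P_iff.1 h with rfl | rfl <;> simp [toggle]

lemma forall₂_replicate_left {α β : Type*} {R : α → β → Prop} {a : α} :
    ∀ {n : ℕ} {l : List β},
      List.Forall₂ R (List.replicate n a) l ↔ l.length = n ∧ ∀ b ∈ l, R a b := by
  intro n
  induction n with
  | zero =>
    intro l
    constructor
    · rintro h
      cases h
      simp
    · rintro ⟨h, -⟩
      rw [List.length_eq_zero_iff] at h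
      subst h
      simp [List.replicate]
  | succ n ih =>
    intro l
    rw [List.replicate_succ]
    constructor
    · intro h
      cases h with
      | cons hR h =>
        obtain ⟨hlen, hall⟩ := ih.1 h
        refine ⟨by simp [hlen], fun c hc => ?_⟩
        rcases List.mem_cons.1 hc with rfl | hc
        · exact hR
        · exact hall c hc
    · rintro ⟨hlen, hall⟩
      rcases l with _ | ⟨b, l'⟩
      · simp at hlen
      · refine List.Forall₂.cons (hall b (by simp)) (ih.2 ⟨by simpa using hlen, ?_⟩)
        exact fun c hc => hall c (List.mem_cons_of_mem _ hc)

/-- The subword condition over `a^α` is just a counting condition. -/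
lemma wle_iff {s : ℕ} (a : Fin s) (α : ℕ) (w : List (Letter s)) :
    WLE (List.replicate α (some a)) w ↔ α ≤ w.countP (P a) := by
  constructor
  · rintro ⟨w', hsub, hf⟩
    obtain ⟨hlen, hall⟩ := forall₂_replicate_left.1 hf
    have h1 : w'.countP (P a) = w'.length := by
      rw [List.countP_eq_length]
      intro y hy
      rcases hall y hy with h | h
      · exact P_iff.2 (Or.inl h.symm)
      · exact P_iff.2 (Or.inr h)
    calc α = w'.countP (P a) := by rw [h1, hlen]
      _ ≤ w.countP (P a) := hsub.countP_le
  · intro h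
    refine ⟨(w.filter (P a)).take α, ((w.filter (P a)).take_sublist α).trans
      (w.filter_sublist), forall₂_replicate_left.2 ⟨?_, ?_⟩⟩
    · rw [List.length_take]
      have := List.countP_eq_length_filter (p := P a) (l := w)
      omega
    · intro y hy
      have := List.of_mem_filter ((List.take_subset _ _) hy)
      rcases P_iff.1 this with h | h
      · exact Or.inl h.symm
      · exact Or.inr h

/-- The sign-reversing involution: toggle the leftmost letter in `{a, c}`. -/
def flip {s : ℕ} (a : Fin s) (w : List (Letter s)) : List (Letter s) :=
  w.set (w.findIdx (P a)) (toggle a (w.getD (w.findIdx (P a)) none))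

lemma flip_of_decomp {s : ℕ} (a : Fin s) (u v : List (Letter s)) (x : Letter s)
    (hx : P a x = true) (hu : ∀ y ∈ u, P a y = false) :
    flip a (u ++ x :: v) = u ++ toggle a x :: v := by
  have hfind : (u ++ x :: v).findIdx (P a) = u.length := by
    rw [List.findIdx_append, List.findIdx_eq_length_of_false hu, if_neg (lt_irrefl _),
      List.findIdx_cons]
    simp [hx]
  unfold flip
  rw [hfind]
  have hgetD : (u ++ x :: v).getD u.length none = x := by
    rw [List.getD_eq_getElem?_getD, List.getElem?_append_right (le_refl _)]
    simp
  rw [hgetD, List.set_append_right _ _ (le_refl _)]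
  simp

lemma exists_decomp {s : ℕ} (a : Fin s) (w : List (Letter s)) (h : ∃ x ∈ w, P a x = true) :
    ∃ u x v, w = u ++ x :: v ∧ P a x = true ∧ ∀ y ∈ u, P a y = false := by
  induction w with
  | nil => simp at h
  | cons y ys ih =>
    by_cases hy : P a y = true
    · exact ⟨[], y, ys, by simp, hy, by simp⟩
    · have hys : ∃ x ∈ ys, P a x = true := by
        obtain ⟨x, hx, hPx⟩ := h
        rcases List.mem_cons.1 hx with rfl | hx
        · exact absurd hPx hy
        · exact ⟨x, hx, hPx⟩
      obtain ⟨u, x, v, rfl, hx, hu⟩ := ih hys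
      refine ⟨y :: u, x, v, by simp, hx, fun z hz => ?_⟩
      rcases List.mem_cons.1 hz with rfl | hz
      · simpa using hy
      · exact hu z hz

lemma length_flip {s : ℕ} (a : Fin s) (w : List (Letter s)) :
    (flip a w).length = w.length := List.length_set

lemma countP_flip {s : ℕ} (a : Fin s) (w : List (Letter s)) (h : ∃ x ∈ w, P a x = true) :
    (flip a w).countP (P a) = w.countP (P a) := by
  obtain ⟨u, x, v, rfl, hx, hu⟩ := exists_decomp a w h
  rw [flip_of_decomp a u v x hx hu]
  simp [List.countP_append, List.countP_cons, hx, P_toggle]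

lemma neg_pow_count_flip {s : ℕ} (a : Fin s) (w : List (Letter s))
    (h : ∃ x ∈ w, P a x = true) :
    (-1 : ℤ) ^ ((flip a w).count (none : Letter s)) =
      -(-1 : ℤ) ^ (w.count (none : Letter s)) := by
  obtain ⟨u, x, v, rfl, hx, hu⟩ := exists_decomp a w h
  rw [flip_of_decomp a u v x hx hu]
  rcases P_iff.1 hx with rfl | rfl
  · have h1 : (u ++ toggle a (some a) :: v).count (none : Letter s)
        = (u ++ (some a : Letter s) :: v).count (none : Letter s) + 1 := by
      simp [toggle, List.count_append, List.count_cons]; ring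
    rw [h1, pow_succ]
    ring
  · have h1 : (u ++ (none : Letter s) :: v).count (none : Letter s)
        = (u ++ toggle a (none : Letter s) :: v).count (none : Letter s) + 1 := by
      simp [toggle, List.count_append, List.count_cons]; ring
    rw [h1, pow_succ]
    ring

lemma flip_flip {s : ℕ} (a : Fin s) (w : List (Letter s)) (h : ∃ x ∈ w, P a x = true) :
    flip a (flip a w) = w := by
  obtain ⟨u, x, v, rfl, hx, hu⟩ := exists_decomp a w h
  rw [flip_of_decomp a u v x hx hu, flip_of_decomp a u v (toggle a x) (P_toggle a x) hu,
    toggle_toggle a hx]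

end AltSumAux

open AltSumAux in
/-- For `1 ≤ α ≤ β`, the alternating sum over `i` of the number of words of length `β`
with exactly `i` letters `c` lying above `a_1^α` is zero. -/
theorem alt_sum_above_a_pow (s : ℕ) (hs : 1 ≤ s) (α β : ℕ) (hα : 1 ≤ α) (hαβ : α ≤ β) :
    ∑ i ∈ Finset.range (β + 1), (-1 : ℤ) ^ i *
      ({w : List (Letter s) | w.length = β ∧ w.count (none : Letter s) = i ∧
        WLE (List.replicate α (some (⟨0, hs⟩ : Fin s)) : List (Letter s)) w}.ncard : ℤ)
      = 0 := by
  classical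
  set a : Fin s := ⟨0, hs⟩ with ha
  have hT : {l : List (Letter s) | l.length = β}.Finite := List.finite_length_eq _ _
  set F : Finset (List (Letter s)) :=
    hT.toFinset.filter (fun w => α ≤ w.countP (P a)) with hF
  have hmemF : ∀ w : List (Letter s),
      w ∈ F ↔ w.length = β ∧ α ≤ w.countP (P a) := by
    intro w
    simp [hF, Set.Finite.mem_toFinset]
  have hex : ∀ w ∈ F, ∃ x ∈ w, P a x = true := by
    intro w hw
    rw [← List.countP_pos_iff]
    have := ((hmemF w).1 hw).2
    omega
  have hset : ∀ i, {w : List (Letter s) | w.length = β ∧ w.count (none : Letter s) = i ∧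
      WLE (List.replicate α (some a) : List (Letter s)) w}
      = ↑(F.filter (fun w => w.count (none : Letter s) = i)) := by
    intro i
    ext w
    simp only [Set.mem_setOf_eq, Finset.coe_filter, hmemF, wle_iff]
    tauto
  have hcard : ∀ i, ({w : List (Letter s) | w.length = β ∧ w.count (none : Letter s) = i ∧
      WLE (List.replicate α (some a) : List (Letter s)) w}.ncard : ℤ)
      = ((F.filter (fun w => w.count (none : Letter s) = i)).card : ℤ) := by
    intro i
    rw [hset i, Set.ncard_coe_finset]
  calc
    ∑ i ∈ Finset.range (β + 1), (-1 : ℤ) ^ i *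
        ({w : List (Letter s) | w.length = β ∧ w.count (none : Letter s) = i ∧
          WLE (List.replicate α (some a) : List (Letter s)) w}.ncard : ℤ)
      = ∑ i ∈ Finset.range (β + 1),
          ∑ w ∈ F.filter (fun w => w.count (none : Letter s) = i),
            (-1 : ℤ) ^ (w.count (none : Letter s)) := by
        refine Finset.sum_congr rfl fun i _ => ?_
        rw [hcard i, Finset.sum_congr rfl (fun w hw => ?_), Finset.sum_const,
          nsmul_eq_mul, mul_comm]
        have : w.count (none : Letter s) = i := (Finset.mem_filter.1 hw).2
        rw [this]
    _ = ∑ w ∈ F, (-1 : ℤ) ^ (w.count (none : Letter s)) := by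
        refine Finset.sum_fiberwise_of_maps_to (fun w hw => ?_) _
        rw [Finset.mem_range, Nat.lt_succ_iff]
        have h1 : w.count (none : Letter s) ≤ w.length := List.count_le_length
        rw [(hmemF w).1 hw |>.1] at h1
        exact h1
    _ = 0 := by
        refine Finset.sum_involution (fun w _ => flip a w) ?_ ?_ ?_ ?_
        · intro w hw
          show (-1 : ℤ) ^ (w.count (none : Letter s)) +
            (-1 : ℤ) ^ ((flip a w).count (none : Letter s)) = 0
          rw [neg_pow_count_flip a w (hex w hw)]
          ring
        · intro w hw hne hcon
          have hcon' : flip a w = w := hcon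
          have h2 := neg_pow_count_flip a w (hex w hw)
          rw [hcon'] at h2
          exact hne (by linarith)
        · intro w hw
          show flip a w ∈ F
          rw [hmemF]
          refine ⟨?_, ?_⟩
          · rw [length_flip, ((hmemF w).1 hw).1]
          · rw [countP_flip a w (hex w hw)]
            exact ((hmemF w).1 hw).2
        · intro w hw
          exact flip_flip a w (hex w hw)
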